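/- arXiv:2511.20898 — 5 statements merged into one kernel-verified Lean document; each statement's English description precedes it below -/
import Mathlib

section
/- Let φ : [0,∞) → [0,∞) satisfy (aInc)_1 with constant L, i.e. t ↦ φ(t)/t is almost increasing on (0,∞) with constant L. Then for any finite sequence of nonnegative reals t_1,…,t_N and nonnegative weights λ_1,…,λ_N with Σ λ_k = 1, we have φ(c Σ λ_k t_k) ≤ Σ λ_k φ(t_k), where c > 0 is a constant depending only on L (one may take c = 1/(2L)). -/
open Real Finset

/-- Discrete Jensen-type inequality for functions satisfying (aInc)₁ with constant L. -/
theorem stmt_2 (φ : ℝ → ℝ) (L : ℝ) (hL : 1 ≤ L)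
    (hφ0 : φ 0 = 0) (hmono : MonotoneOn φ (Set.Ici 0))
    (hainc : ∀ s t : ℝ, 0 < s → s ≤ t → φ s / s ≤ L * (φ t / t))
    (N : ℕ) (t lam : Fin N → ℝ)
    (ht : ∀ k, 0 ≤ t k) (hlam : ∀ k, 0 ≤ lam k)
    (hsum : ∑ k, lam k = 1) :
    φ ((1 / (2 * L)) * ∑ k, lam k * t k) ≤ ∑ k, lam k * φ (t k) := by
  have hL0 : (0:ℝ) < L := lt_of_lt_of_le one_pos hL
  set c : ℝ := 1 / (2 * L) with hc
  have hc0 : 0 < c := by positivity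
  set S : ℝ := ∑ k, lam k * t k with hS
  have hS0 : 0 ≤ S := Finset.sum_nonneg fun k _ => mul_nonneg (hlam k) (ht k)
  have hφnn : ∀ x, 0 ≤ x → 0 ≤ φ x := fun x hx => by
    rw [← hφ0]; exact hmono (Set.mem_Ici.2 le_rfl) (Set.mem_Ici.2 hx) hx
  have hRHSnn : 0 ≤ ∑ k, lam k * φ (t k) :=
    Finset.sum_nonneg fun k _ => mul_nonneg (hlam k) (hφnn _ (ht k))
  rcases eq_or_lt_of_le hS0 with h0 | hSpos
  · rw [← h0, mul_zero, hφ0]; exact hRHSnn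
  · have hcS : c * S ≤ S / 2 := by
      rw [hc, div_mul_eq_mul_div, one_mul, div_le_div_iff₀ (by positivity) two_pos]
      nlinarith
    set A := Finset.univ.filter (fun k => S / 2 ≤ t k) with hA
    have hAsum : S / 2 ≤ ∑ k ∈ A, lam k * t k := by
      have hsplit := Finset.sum_filter_add_sum_filter_not Finset.univ
        (fun k => S / 2 ≤ t k) (fun k => lam k * t k)
      have hcomp : ∑ k ∈ Finset.univ.filter (fun k => ¬ S / 2 ≤ t k), lam k * t k ≤ S / 2 := by
        calc ∑ k ∈ Finset.univ.filter (fun k => ¬ S / 2 ≤ t k), lam k * t k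
            ≤ ∑ k ∈ Finset.univ.filter (fun k => ¬ S / 2 ≤ t k), lam k * (S / 2) := by
              apply Finset.sum_le_sum
              intro k hk
              have hk' := (Finset.mem_filter.1 hk).2
              exact mul_le_mul_of_nonneg_left (le_of_not_ge hk') (hlam k)
          _ = (∑ k ∈ Finset.univ.filter (fun k => ¬ S / 2 ≤ t k), lam k) * (S / 2) := by
              rw [Finset.sum_mul]
          _ ≤ 1 * (S / 2) := by
              apply mul_le_mul_of_nonneg_right _ (by linarith)
              rw [← hsum]
              exact Finset.sum_le_sum_of_subset_of_nonneg (Finset.filter_subset _ _)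
                (fun k _ _ => hlam k)
          _ = S / 2 := one_mul _
      have : S = (∑ k ∈ A, lam k * t k)
          + ∑ k ∈ Finset.univ.filter (fun k => ¬ S / 2 ≤ t k), lam k * t k := by
        rw [hA, hsplit]
      linarith
    have key : ∀ k ∈ A, φ (c * S) * (lam k * t k) ≤ (S / 2) * (lam k * φ (t k)) := by
      intro k hk
      have hk' : S / 2 ≤ t k := (Finset.mem_filter.1 hk).2
      have htk : 0 < t k := lt_of_lt_of_le (by linarith) hk'
      have hcs : (0:ℝ) < c * S := by positivity
      have h1 := hainc (c * S) (t k) hcs (le_trans hcS hk')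
      rw [div_le_iff₀ hcs] at h1
      have h3 := mul_le_mul_of_nonneg_right h1 htk.le
      have h2 : φ (c * S) * t k ≤ (S / 2) * φ (t k) := by
        have htk' : t k ≠ 0 := ne_of_gt htk
        have hrw : L * (φ (t k) / t k) * (c * S) * t k = (S / 2) * φ (t k) := by
          rw [hc]; field_simp
        linarith [h3, hrw ▸ h3]
      calc φ (c * S) * (lam k * t k) = lam k * (φ (c * S) * t k) := by ring
        _ ≤ lam k * ((S / 2) * φ (t k)) := mul_le_mul_of_nonneg_left h2 (hlam k)
        _ = (S / 2) * (lam k * φ (t k)) := by ring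
    have hmain : φ (c * S) * (S / 2) ≤ (S / 2) * ∑ k, lam k * φ (t k) := by
      calc φ (c * S) * (S / 2)
          ≤ φ (c * S) * ∑ k ∈ A, lam k * t k :=
            mul_le_mul_of_nonneg_left hAsum (hφnn _ (by positivity))
        _ = ∑ k ∈ A, φ (c * S) * (lam k * t k) := by rw [Finset.mul_sum]
        _ ≤ ∑ k ∈ A, (S / 2) * (lam k * φ (t k)) := Finset.sum_le_sum key
        _ = (S / 2) * ∑ k ∈ A, lam k * φ (t k) := by rw [Finset.mul_sum]
        _ ≤ (S / 2) * ∑ k, lam k * φ (t k) := by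
            apply mul_le_mul_of_nonneg_left _ (by linarith)
            exact Finset.sum_le_sum_of_subset_of_nonneg (Finset.filter_subset _ _)
              (fun k _ _ => mul_nonneg (hlam k) (hφnn _ (ht k)))
    have hhalf : (0:ℝ) < S / 2 := by linarith
    nlinarith [hmain]
end

section
/- Let Ω ⊂ ℝ^n be a bounded open set, 1 < p < ∞, and ω ∈ A_p. Let φ be a weak Φ-function on Ω satisfying (A0) with constant β_0 and (aInc)_p. Then every f in the weighted generalized Orlicz space L^ψ(Ω), where ψ(x,t) = φ(x,t)ω(x), belongs to L^1_loc(Ω). -/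
open MeasureTheory Metric ENNReal Filter Set

/-- Left-continuous generalized inverse of a Φ-function. -/
noncomputable def phiInv {α : Type*} (φ : α → ℝ → ℝ) (x : α) (s : ℝ) : ℝ :=
  sInf {τ : ℝ | 0 ≤ τ ∧ s ≤ φ x τ}

/-- If `ω ∈ A_p` and `φ` is a weak Φ-function satisfying (A0) and (aInc)_p, then every
member of the weighted generalized Orlicz space `L^ψ(Ω)`, `ψ(x,t) = φ(x,t)ω(x)`, is
locally integrable on `Ω`. -/
theorem stmt_7 (n : ℕ) (p L : ℝ) (hp : 1 < p) (hL : 1 ≤ L)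
    (Ω : Set (EuclideanSpace ℝ (Fin n))) (hΩo : IsOpen Ω) (hΩb : Bornology.IsBounded Ω)
    (φ : EuclideanSpace ℝ (Fin n) → ℝ → ℝ)
    (hφmeas : Measurable (Function.uncurry φ))
    (hφnonneg : ∀ x ∈ Ω, ∀ t : ℝ, 0 ≤ t → 0 ≤ φ x t)
    (hφmono : ∀ x ∈ Ω, MonotoneOn (φ x) (Set.Ici 0))
    (hφ0 : ∀ x ∈ Ω, φ x 0 = 0)
    (hφ0' : ∀ x ∈ Ω, Tendsto (φ x) (nhdsWithin 0 (Set.Ioi 0)) (nhds 0))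
    (hφtop : ∀ x ∈ Ω, Tendsto (φ x) atTop atTop)
    (hainc1 : ∀ x ∈ Ω, ∀ s t : ℝ, 0 < s → s ≤ t → φ x s / s ≤ L * (φ x t / t))
    (haincp : ∀ x ∈ Ω, ∀ s t : ℝ, 0 < s → s ≤ t →
      φ x s / s ^ p ≤ L * (φ x t / t ^ p))
    (β₀ : ℝ) (hβ₀ : 0 < β₀ ∧ β₀ ≤ 1)
    (hA0 : ∀ᵐ x ∂(volume.restrict Ω), β₀ ≤ phiInv φ x 1 ∧ phiInv φ x 1 ≤ 1 / β₀)
    (ω : EuclideanSpace ℝ (Fin n) → ℝ) (hωmeas : Measurable ω)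
    (hωpos : ∀ᵐ x ∂volume, 0 < ω x)
    (A : ℝ≥0∞) (hA : A ≠ ∞)
    (hAp : ∀ (z : EuclideanSpace ℝ (Fin n)) (r : ℝ), 0 < r →
      ((∫⁻ y in ball z r, ENNReal.ofReal (ω y)) / volume (ball z r)) *
        ((∫⁻ y in ball z r, ENNReal.ofReal (ω y ^ (-(1 : ℝ) / (p - 1)))) /
          volume (ball z r)) ^ (p - 1) ≤ A)
    (f : EuclideanSpace ℝ (Fin n) → ℝ) (hf : Measurable f)
    (hfψ : ∃ lam : ℝ, 0 < lam ∧
      ∫⁻ x in Ω, ENNReal.ofReal (φ x (|f x| / lam) * ω x) ≤ 1) :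
    LocallyIntegrableOn f Ω volume := by
  obtain ⟨lam, hlam, hint⟩ := hfψ
  obtain ⟨hβ₀pos, hβ₀le⟩ := hβ₀
  have hp0 : (0:ℝ) < p := by linarith
  have hp1 : (0:ℝ) < p - 1 := by linarith
  set c : ℝ := 2 / β₀ with hc
  have hcpos : 0 < c := by positivity
  -- (A0) upper bound gives `1 ≤ φ x c`
  have hφc1 : ∀ x ∈ Ω, phiInv φ x 1 ≤ 1 / β₀ → 1 ≤ φ x c := by
    intro x hx hinv
    obtain ⟨τ, hτ0, hτ1, hτc⟩ : ∃ τ, 0 ≤ τ ∧ 1 ≤ φ x τ ∧ τ ≤ c := by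
      by_contra h
      push_neg at h
      have hne : {τ : ℝ | 0 ≤ τ ∧ 1 ≤ φ x τ}.Nonempty := by
        obtain ⟨τ, hτ⟩ :=
          ((eventually_ge_atTop (0:ℝ)).and ((hφtop x hx).eventually_ge_atTop 1)).exists
        exact ⟨τ, hτ.1, hτ.2⟩
      have hle : c ≤ phiInv φ x 1 :=
        le_csInf hne (fun τ hτ => (h τ hτ.1 hτ.2).le)
      have h2 : (1:ℝ) / β₀ < c := by
        rw [hc, div_lt_div_iff₀ hβ₀pos hβ₀pos]
        nlinarith
      linarith [hle.trans hinv]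
    exact hτ1.trans (hφmono x hx (mem_Ici.mpr hτ0) (mem_Ici.mpr hcpos.le) hτc)
  -- pointwise real inequality
  have hreal : ∀ x ∈ Ω, phiInv φ x 1 ≤ 1 / β₀ → 0 ≤ ω x →
      |f x| ^ p * ω x ≤
        lam ^ p * (c ^ p * ω x + (L * c ^ p) * (φ x (|f x| / lam) * ω x)) := by
    intro x hx hinv hω
    set g := |f x| / lam with hg
    have hg0 : 0 ≤ g := div_nonneg (abs_nonneg _) hlam.le
    have hfg : |f x| = lam * g := by rw [hg]; field_simp
    have hlp : (0:ℝ) ≤ lam ^ p := Real.rpow_nonneg hlam.le p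
    have hcp : (0:ℝ) < c ^ p := Real.rpow_pos_of_pos hcpos p
    have key : g ^ p ≤ c ^ p + (L * c ^ p) * φ x g := by
      rcases le_or_gt g c with h | h
      · have h1 : g ^ p ≤ c ^ p := Real.rpow_le_rpow hg0 h hp0.le
        have hφg : 0 ≤ φ x g := hφnonneg x hx g hg0
        nlinarith [mul_nonneg (mul_nonneg (by linarith : (0:ℝ) ≤ L) hcp.le) hφg]
      · have h2 := haincp x hx c g hcpos h.le
        have h1 := hφc1 x hx hinv
        have hgp : (0:ℝ) < g ^ p := Real.rpow_pos_of_pos (hcpos.trans h) p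
        have h3 : 1 / c ^ p ≤ L * φ x g / g ^ p := by
          have h4 : φ x c / c ^ p ≤ L * φ x g / g ^ p := by
            rw [mul_div_assoc]; exact h2
          have h5 : 1 / c ^ p ≤ φ x c / c ^ p := by gcongr
          linarith
        rw [div_le_div_iff₀ hcp hgp] at h3
        nlinarith
    calc |f x| ^ p * ω x = lam ^ p * (g ^ p * ω x) := by
          rw [hfg, Real.mul_rpow hlam.le hg0]; ring
      _ ≤ lam ^ p * ((c ^ p + (L * c ^ p) * φ x g) * ω x) :=
          mul_le_mul_of_nonneg_left (mul_le_mul_of_nonneg_right key hω) hlp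
      _ = lam ^ p * (c ^ p * ω x + (L * c ^ p) * (φ x g * ω x)) := by ring
  -- now localize
  intro x₀ hx₀
  obtain ⟨r, hr, hball⟩ := Metric.isOpen_iff.mp hΩo x₀ hx₀
  refine ⟨ball x₀ r, mem_nhdsWithin_of_mem_nhds (ball_mem_nhds _ hr), ?_⟩
  set μ := volume.restrict (ball x₀ r) with hμ
  have hωpos' : ∀ᵐ x ∂μ, 0 < ω x := ae_restrict_of_ae hωpos
  have hmem : ∀ᵐ x ∂μ, x ∈ Ω :=
    (ae_restrict_mem measurableSet_ball).mono fun x h => hball h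
  have hA0' : ∀ᵐ x ∂μ, phiInv φ x 1 ≤ 1 / β₀ :=
    ae_restrict_of_ae_restrict_of_subset hball (hA0.mono fun x h => h.2)
  have hV0 : 0 < volume (ball x₀ r) := measure_ball_pos _ _ hr
  have hVfin : volume (ball x₀ r) < ∞ := measure_ball_lt_top
  have hA' := hAp x₀ r hr
  set I₁ : ℝ≥0∞ := ∫⁻ y in ball x₀ r, ENNReal.ofReal (ω y) with hI₁def
  set I₂ : ℝ≥0∞ := ∫⁻ y in ball x₀ r, ENNReal.ofReal (ω y ^ (-(1 : ℝ) / (p - 1)))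
    with hI₂def
  have hμ0 : μ ≠ 0 := by
    intro h0
    have : volume (ball x₀ r) = 0 := by
      rw [← Measure.restrict_apply_univ, ← hμ, h0]; simp
    exact hV0.ne' this
  have hI₁pos : 0 < I₁ := by
    rw [pos_iff_ne_zero]
    intro h0
    rw [hI₁def, lintegral_eq_zero_iff hωmeas.ennreal_ofReal] at h0
    have hfalse : ∀ᵐ x ∂μ, False := by
      filter_upwards [h0, hωpos'] with x h1 h2
      simp only [Pi.zero_apply, ENNReal.ofReal_eq_zero] at h1
      linarith
    exact hμ0 (ae_eq_bot.mp (Filter.eventually_false_iff_eq_bot.mp hfalse))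
  have hI₂pos : 0 < I₂ := by
    rw [pos_iff_ne_zero]
    intro h0
    rw [hI₂def, lintegral_eq_zero_iff
      ((hωmeas.pow measurable_const).ennreal_ofReal)] at h0
    have hfalse : ∀ᵐ x ∂μ, False := by
      filter_upwards [h0, hωpos'] with x h1 h2
      have : 0 < ω x ^ (-(1 : ℝ) / (p - 1)) := Real.rpow_pos_of_pos h2 _
      simp only [Pi.zero_apply, ENNReal.ofReal_eq_zero] at h1
      linarith
    exact hμ0 (ae_eq_bot.mp (Filter.eventually_false_iff_eq_bot.mp hfalse))
  have hI₁fin : I₁ ≠ ∞ := by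
    intro hI
    apply hA
    refine top_le_iff.mp ?_
    have h1 : I₁ / volume (ball x₀ r) = ∞ := by
      rw [hI]; exact ENNReal.top_div_of_ne_top hVfin.ne
    have h2 : (I₂ / volume (ball x₀ r)) ^ (p - 1) ≠ 0 := by
      intro hcontra
      rw [ENNReal.rpow_eq_zero_iff] at hcontra
      rcases hcontra with ⟨h, _⟩ | ⟨_, h⟩
      · rcases ENNReal.div_eq_zero_iff.mp h with h' | h'
        · exact hI₂pos.ne' h'
        · exact hVfin.ne h'
      · linarith
    calc (⊤:ℝ≥0∞) = (I₁ / volume (ball x₀ r)) *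
          (I₂ / volume (ball x₀ r)) ^ (p - 1) := by rw [h1, ENNReal.top_mul h2]
      _ ≤ A := hA'
  have hI₂fin : I₂ ≠ ∞ := by
    intro hI
    apply hA
    refine top_le_iff.mp ?_
    have h1 : (I₂ / volume (ball x₀ r)) ^ (p - 1) = ∞ := by
      rw [hI, ENNReal.top_div_of_ne_top hVfin.ne, ENNReal.top_rpow_of_pos hp1]
    have h2 : I₁ / volume (ball x₀ r) ≠ 0 := by
      rw [ne_eq, ENNReal.div_eq_zero_iff]
      push_neg
      exact ⟨hI₁pos.ne', hVfin.ne⟩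
    calc (⊤:ℝ≥0∞) = (I₁ / volume (ball x₀ r)) *
          (I₂ / volume (ball x₀ r)) ^ (p - 1) := by rw [h1, ENNReal.mul_top h2]
      _ ≤ A := hA'
  -- the measurable integrands
  have hmeasφ : Measurable fun x => φ x (|f x| / lam) :=
    hφmeas.comp (measurable_id.prodMk ((hf.abs).div_const lam))
  have hFmeas : Measurable fun x => ENNReal.ofReal |f x| := hf.abs.ennreal_ofReal
  have hWmeas : Measurable fun x => ENNReal.ofReal (ω x) := hωmeas.ennreal_ofReal
  -- pointwise ENNReal bound
  have hpt : ∀ᵐ x ∂μ, ENNReal.ofReal |f x| ^ p * ENNReal.ofReal (ω x) ≤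
      ENNReal.ofReal (lam ^ p) * (ENNReal.ofReal (c ^ p) * ENNReal.ofReal (ω x) +
        ENNReal.ofReal (L * c ^ p) * ENNReal.ofReal (φ x (|f x| / lam) * ω x)) := by
    filter_upwards [hA0', hωpos', hmem] with x hinv hω hx
    have h := hreal x hx hinv hω.le
    have hφg : 0 ≤ φ x (|f x| / lam) :=
      hφnonneg x hx _ (div_nonneg (abs_nonneg _) hlam.le)
    have e1 : ENNReal.ofReal |f x| ^ p * ENNReal.ofReal (ω x)
        = ENNReal.ofReal (|f x| ^ p * ω x) := by
      rw [ENNReal.ofReal_mul (Real.rpow_nonneg (abs_nonneg _) p),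
        ENNReal.ofReal_rpow_of_nonneg (abs_nonneg _) hp0.le]
    rw [e1]
    calc ENNReal.ofReal (|f x| ^ p * ω x)
        ≤ ENNReal.ofReal (lam ^ p *
            (c ^ p * ω x + (L * c ^ p) * (φ x (|f x| / lam) * ω x))) :=
          ENNReal.ofReal_le_ofReal h
      _ = _ := by
          rw [ENNReal.ofReal_mul (Real.rpow_nonneg hlam.le p),
            ENNReal.ofReal_add (by positivity) (by positivity),
            ENNReal.ofReal_mul (by positivity),
            ENNReal.ofReal_mul (by positivity)]
  -- the main finiteness of the weighted p-integral
  have hJ : ∫⁻ x in ball x₀ r, ENNReal.ofReal (φ x (|f x| / lam) * ω x) ≤ 1 :=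
    le_trans (lintegral_mono_set hball) hint
  have hmain : ∫⁻ x, ENNReal.ofReal |f x| ^ p * ENNReal.ofReal (ω x) ∂μ ≤
      ENNReal.ofReal (lam ^ p) * (ENNReal.ofReal (c ^ p) * I₁ +
        ENNReal.ofReal (L * c ^ p) *
          ∫⁻ x in ball x₀ r, ENNReal.ofReal (φ x (|f x| / lam) * ω x)) := by
    calc ∫⁻ x, ENNReal.ofReal |f x| ^ p * ENNReal.ofReal (ω x) ∂μ
        ≤ ∫⁻ x, ENNReal.ofReal (lam ^ p) *
            (ENNReal.ofReal (c ^ p) * ENNReal.ofReal (ω x) +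
              ENNReal.ofReal (L * c ^ p) *
                ENNReal.ofReal (φ x (|f x| / lam) * ω x)) ∂μ := lintegral_mono_ae hpt
      _ = _ := by
          rw [lintegral_const_mul' _ _ ENNReal.ofReal_ne_top,
            lintegral_add_left (hWmeas.const_mul _),
            lintegral_const_mul' _ _ ENNReal.ofReal_ne_top,
            lintegral_const_mul' _ _ ENNReal.ofReal_ne_top]
  have hfin : ∫⁻ x, ENNReal.ofReal |f x| ^ p * ENNReal.ofReal (ω x) ∂μ ≠ ∞ := by
    refine ne_of_lt (lt_of_le_of_lt hmain ?_)
    refine ENNReal.mul_lt_top ENNReal.ofReal_lt_top ?_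
    refine ENNReal.add_lt_top.mpr ⟨?_, ?_⟩
    · exact ENNReal.mul_lt_top ENNReal.ofReal_lt_top hI₁fin.lt_top
    · exact ENNReal.mul_lt_top ENNReal.ofReal_lt_top (lt_of_le_of_lt hJ one_lt_top)
  -- Hölder
  set q : ℝ := p / (p - 1) with hq
  have hq0 : 0 < q := by positivity
  have hpq : Real.HolderConjugate p q := Real.HolderConjugate.conjExponent hp
  set a : EuclideanSpace ℝ (Fin n) → ℝ≥0∞ :=
    fun x => ENNReal.ofReal |f x| * ENNReal.ofReal (ω x) ^ (1 / p) with ha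
  set b : EuclideanSpace ℝ (Fin n) → ℝ≥0∞ :=
    fun x => ENNReal.ofReal (ω x) ^ (-(1 / p)) with hb
  have hameas : AEMeasurable a μ :=
    (hFmeas.mul (hWmeas.pow measurable_const)).aemeasurable
  have hbmeas : AEMeasurable b μ := (hWmeas.pow measurable_const).aemeasurable
  have hab : (fun x => ENNReal.ofReal |f x|) =ᵐ[μ] fun x => (a * b) x := by
    filter_upwards [hωpos'] with x hω
    have hW0 : ENNReal.ofReal (ω x) ≠ 0 := by
      simp only [ne_eq, ENNReal.ofReal_eq_zero, not_le]; exact hω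
    simp only [ha, hb, Pi.mul_apply]
    rw [mul_assoc, ← ENNReal.rpow_add _ _ hW0 ENNReal.ofReal_ne_top]
    norm_num
  have heap : ∀ x, a x ^ p = ENNReal.ofReal |f x| ^ p * ENNReal.ofReal (ω x) := by
    intro x
    rw [ha]
    rw [ENNReal.mul_rpow_of_nonneg _ _ hp0.le, ← ENNReal.rpow_mul,
      one_div_mul_cancel hp0.ne', ENNReal.rpow_one]
  have hexp : (-(1 / p)) * q = -(1 : ℝ) / (p - 1) := by
    rw [hq]; field_simp
  have hebq : (fun x => b x ^ q) =ᵐ[μ]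
      fun y => ENNReal.ofReal (ω y ^ (-(1 : ℝ) / (p - 1))) := by
    filter_upwards [hωpos'] with x hω
    rw [hb]
    simp only
    rw [← ENNReal.rpow_mul, hexp, ENNReal.ofReal_rpow_of_pos hω]
  have hH := ENNReal.lintegral_mul_le_Lp_mul_Lq μ hpq hameas hbmeas
  have hmainF : ∫⁻ x, ENNReal.ofReal |f x| ∂μ < ∞ := by
    calc ∫⁻ x, ENNReal.ofReal |f x| ∂μ = ∫⁻ x, (a * b) x ∂μ := lintegral_congr_ae hab
      _ ≤ (∫⁻ x, a x ^ p ∂μ) ^ (1 / p) * (∫⁻ x, b x ^ q ∂μ) ^ (1 / q) := hH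
      _ = (∫⁻ x, ENNReal.ofReal |f x| ^ p * ENNReal.ofReal (ω x) ∂μ) ^ (1 / p)
          * I₂ ^ (1 / q) := by
          rw [lintegral_congr (fun x => heap x), lintegral_congr_ae hebq]
      _ < ∞ := ENNReal.mul_lt_top
          (ENNReal.rpow_lt_top_of_nonneg (by positivity) hfin)
          (ENNReal.rpow_lt_top_of_nonneg (by positivity) hI₂fin)
  refine ⟨hf.aestronglyMeasurable, ?_⟩
  rw [hasFiniteIntegral_iff_norm]
  simpa [Real.norm_eq_abs] using hmainF
end

section
/- Let φ be a weak Φ-function on Ω satisfying (A0) with constant β_0 and (aDec)_q^∞ with constant L (i.e., t ↦ t^{-q}(φ(x,t)+1) is almost decreasing on (0,∞)). Then ψ(x,t) := φ(x,t) + t satisfies (aDec)_q with some constant L' depending only on L, q, β_0 (i.e., t ↦ t^{-q}ψ(x,t) is almost decreasing on (0,∞)). -/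
open MeasureTheory Filter Set

private lemma aux_div (q s t : ℝ) (hq : 1 < q) (hs : 0 < s) (hst : s ≤ t) :
    t / t ^ q ≤ s / s ^ q := by
  have ht : 0 < t := lt_of_lt_of_le hs hst
  have h1 : s ^ (q - 1) ≤ t ^ (q - 1) := Real.rpow_le_rpow hs.le hst (by linarith)
  rw [Real.rpow_sub hs, Real.rpow_sub ht, Real.rpow_one, Real.rpow_one] at h1
  have htq : (0:ℝ) < t ^ q := Real.rpow_pos_of_pos ht q
  have hsq : (0:ℝ) < s ^ q := Real.rpow_pos_of_pos hs q
  rw [div_le_div_iff₀ hs ht] at h1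
  rw [div_le_div_iff₀ htq hsq]
  nlinarith

private lemma aux_caseA (L β₀ q s t φs φt φm : ℝ) (hL : 1 ≤ L) (hq : 1 < q)
    (hβ0 : 0 < β₀) (hs : 0 < s) (hst : s ≤ t) (htm : t ≤ β₀ / 2)
    (hφs : 0 ≤ φs) (hφm : 0 ≤ φm) (hsmall : φm ≤ 1)
    (haux : φt / t ≤ L * (φm / (β₀ / 2))) :
    (φt + t) / t ^ q ≤ (2 * L / β₀ + 1) * ((φs + s) / s ^ q) := by
  have ht : 0 < t := lt_of_lt_of_le hs hst
  have htq : (0:ℝ) < t ^ q := Real.rpow_pos_of_pos ht q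
  have hsq : (0:ℝ) < s ^ q := Real.rpow_pos_of_pos hs q
  have hm0 : 0 < β₀ / 2 := by linarith
  have hL0 : (0:ℝ) ≤ L := by linarith
  have h2 : φm / (β₀ / 2) ≤ 2 / β₀ := by
    rw [div_le_div_iff₀ hm0 hβ0]
    nlinarith
  have hφt : φt ≤ 2 * L / β₀ * t := by
    have h3 : φt / t ≤ L * (2 / β₀) := le_trans haux (by nlinarith)
    have h4 : φt = φt / t * t := by field_simp
    rw [h4]
    calc φt / t * t ≤ L * (2 / β₀) * t := by nlinarith
      _ = 2 * L / β₀ * t := by ring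
  have hC1 : (0:ℝ) < 2 * L / β₀ + 1 := by positivity
  have hnum : φt + t ≤ (2 * L / β₀ + 1) * t := by nlinarith
  calc (φt + t) / t ^ q ≤ (2 * L / β₀ + 1) * t / t ^ q := by gcongr
    _ = (2 * L / β₀ + 1) * (t / t ^ q) := by ring
    _ ≤ (2 * L / β₀ + 1) * (s / s ^ q) :=
        mul_le_mul_of_nonneg_left (aux_div q s t hq hs hst) hC1.le
    _ ≤ (2 * L / β₀ + 1) * ((φs + s) / s ^ q) := by gcongr; linarith

private lemma aux_caseB (L β₀ q s t φs φt : ℝ) (hL : 1 ≤ L) (hq : 1 < q)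
    (hβ0 : 0 < β₀) (hβ1 : β₀ ≤ 1) (hsm : β₀ / 2 ≤ s) (hst : s ≤ t)
    (hφs : 0 ≤ φs) (hφt : 0 ≤ φt)
    (h1 : (φt + 1) / t ^ q ≤ L * ((φs + 1) / s ^ q)) :
    (φt + t) / t ^ q ≤ (2 * L / β₀ + 1) * ((φs + s) / s ^ q) := by
  have hm0 : 0 < β₀ / 2 := by linarith
  have hs : 0 < s := lt_of_lt_of_le hm0 hsm
  have ht : 0 < t := lt_of_lt_of_le hs hst
  have htq : (0:ℝ) < t ^ q := Real.rpow_pos_of_pos ht q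
  have hsq : (0:ℝ) < s ^ q := Real.rpow_pos_of_pos hs q
  have hL0 : (0:ℝ) ≤ L := by linarith
  have h2 : φs + 1 ≤ 2 / β₀ * (φs + s) := by
    have hone : 1 ≤ 2 / β₀ * s := by
      rw [div_mul_eq_mul_div, le_div_iff₀ hβ0]
      linarith
    have h2b : (1:ℝ) ≤ 2 / β₀ := by
      rw [le_div_iff₀ hβ0]; linarith
    have h2c : 1 * φs ≤ 2 / β₀ * φs := mul_le_mul_of_nonneg_right h2b hφs
    have h2d : 2 / β₀ * (φs + s) = 2 / β₀ * φs + 2 / β₀ * s := by ring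
    linarith
  have hA : φt / t ^ q ≤ L * (2 / β₀) * ((φs + s) / s ^ q) := by
    have e1 : φt / t ^ q ≤ (φt + 1) / t ^ q := by gcongr; linarith
    have e2' : (φs + 1) / s ^ q ≤ 2 / β₀ * ((φs + s) / s ^ q) := by
      rw [← mul_div_assoc]
      gcongr
    have e2 : L * ((φs + 1) / s ^ q) ≤ L * (2 / β₀) * ((φs + s) / s ^ q) := by
      rw [mul_assoc]
      exact mul_le_mul_of_nonneg_left e2' hL0
    exact e1.trans (h1.trans e2)
  have hB : t / t ^ q ≤ (φs + s) / s ^ q := by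
    have h3 := aux_div q s t hq hs hst
    have h4 : s / s ^ q ≤ (φs + s) / s ^ q := by gcongr; linarith
    linarith
  have hsplit : (φt + t) / t ^ q = φt / t ^ q + t / t ^ q := by ring
  have hkey : L * (2 / β₀) * ((φs + s) / s ^ q) + (φs + s) / s ^ q
      = (2 * L / β₀ + 1) * ((φs + s) / s ^ q) := by ring
  rw [hsplit]
  linarith

/-- If a weak Φ-function `φ` satisfies (A0) and (aDec)_q^∞, then `ψ(x,t) := φ(x,t) + t`
satisfies (aDec)_q. -/
theorem stmt_10 (n : ℕ) (L q : ℝ) (hL : 1 ≤ L) (hq : 1 < q)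
    (Ω : Set (EuclideanSpace ℝ (Fin n))) (hΩm : MeasurableSet Ω)
    (φ : EuclideanSpace ℝ (Fin n) → ℝ → ℝ)
    (hφmeas : Measurable (Function.uncurry φ))
    (hφnonneg : ∀ x ∈ Ω, ∀ t : ℝ, 0 ≤ t → 0 ≤ φ x t)
    (hφmono : ∀ x ∈ Ω, MonotoneOn (φ x) (Set.Ici 0))
    (hφ0 : ∀ x ∈ Ω, φ x 0 = 0)
    (hφ0' : ∀ x ∈ Ω, Tendsto (φ x) (nhdsWithin 0 (Set.Ioi 0)) (nhds 0))
    (hφtop : ∀ x ∈ Ω, Tendsto (φ x) atTop atTop)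
    (hainc1 : ∀ x ∈ Ω, ∀ s t : ℝ, 0 < s → s ≤ t → φ x s / s ≤ L * (φ x t / t))
    (β₀ : ℝ) (hβ₀ : 0 < β₀ ∧ β₀ ≤ 1)
    (hA0 : ∀ᵐ x ∂(volume.restrict Ω), β₀ ≤ phiInv φ x 1 ∧ phiInv φ x 1 ≤ 1 / β₀)
    (hadecinf : ∀ x ∈ Ω, ∀ s t : ℝ, 0 < s → s ≤ t →
      (φ x t + 1) / t ^ q ≤ L * ((φ x s + 1) / s ^ q)) :
    ∃ L' : ℝ, 0 < L' ∧
      ∀ᵐ x ∂(volume.restrict Ω), ∀ s t : ℝ, 0 < s → s ≤ t →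
        (φ x t + t) / t ^ q ≤ L' * ((φ x s + s) / s ^ q) := by
  obtain ⟨hβ0, hβ1⟩ := hβ₀
  obtain ⟨C, hCdef⟩ : ∃ C : ℝ, C = 2 * L / β₀ + 1 := ⟨_, rfl⟩
  have hLβ : 0 < 2 * L / β₀ := by positivity
  have hC1 : 1 ≤ C := by linarith
  have hC0 : 0 < C := by linarith
  have hCC : C ≤ C ^ 2 := by nlinarith
  refine ⟨C ^ 2, by positivity, ?_⟩
  filter_upwards [ae_restrict_mem hΩm, hA0] with x hx hA0x
  have hm0 : 0 < β₀ / 2 := by linarith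
  have hsmall : φ x (β₀ / 2) ≤ 1 := by
    by_contra h
    push_neg at h
    have hmem : β₀ / 2 ∈ {τ : ℝ | 0 ≤ τ ∧ 1 ≤ φ x τ} := ⟨hm0.le, h.le⟩
    have hle : phiInv φ x 1 ≤ β₀ / 2 := csInf_le ⟨0, fun τ hτ => hτ.1⟩ hmem
    linarith [hA0x.1]
  have hφm0 : 0 ≤ φ x (β₀ / 2) := hφnonneg x hx _ hm0.le
  intro s t hs hst
  have ht : 0 < t := lt_of_lt_of_le hs hst
  have hsq : (0:ℝ) < s ^ q := Real.rpow_pos_of_pos hs q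
  have hs0' : 0 ≤ φ x s := hφnonneg x hx s hs.le
  have ht0' : 0 ≤ φ x t := hφnonneg x hx t ht.le
  have hss : 0 ≤ (φ x s + s) / s ^ q := by positivity
  rcases le_or_gt t (β₀ / 2) with hcase | hcase
  · have h := aux_caseA L β₀ q s t (φ x s) (φ x t) (φ x (β₀ / 2)) hL hq hβ0 hs hst
      hcase hs0' hφm0 hsmall (hainc1 x hx t (β₀ / 2) ht hcase)
    rw [← hCdef] at h
    exact h.trans (mul_le_mul_of_nonneg_right hCC hss)
  · rcases le_or_gt (β₀ / 2) s with hcase2 | hcase2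
    · have h := aux_caseB L β₀ q s t (φ x s) (φ x t) hL hq hβ0 hβ1 hcase2 hst
        hs0' ht0' (hadecinf x hx s t hs hst)
      rw [← hCdef] at h
      exact h.trans (mul_le_mul_of_nonneg_right hCC hss)
    · have h1 := aux_caseB L β₀ q (β₀ / 2) t (φ x (β₀ / 2)) (φ x t) hL hq hβ0 hβ1 le_rfl
        hcase.le hφm0 ht0' (hadecinf x hx (β₀ / 2) t hm0 hcase.le)
      have h2 := aux_caseA L β₀ q s (β₀ / 2) (φ x s) (φ x (β₀ / 2)) (φ x (β₀ / 2)) hL hq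
        hβ0 hs hcase2.le le_rfl hs0' hφm0 hsmall (hainc1 x hx (β₀ / 2) (β₀ / 2) hm0 le_rfl)
      rw [← hCdef] at h1 h2
      calc (φ x t + t) / t ^ q
          ≤ C * ((φ x (β₀ / 2) + β₀ / 2) / (β₀ / 2) ^ q) := h1
        _ ≤ C * (C * ((φ x s + s) / s ^ q)) := mul_le_mul_of_nonneg_left h2 hC0.le
        _ = C ^ 2 * ((φ x s + s) / s ^ q) := by ring
end

section
/- Let Ω ⊂ ℝ^n be bounded, ω a weight with ω(Ω) < ∞, and φ a weak Φ-function on Ω satisfying (aInc)_1 with uniform constant L. If φ satisfies (A1)_ω with constant β_1, then φ satisfies (A1')_ω with a constant β̂_1 depending only on β_1 and L: φ(x, β̂_1 t) ≤ φ(y,t) + 1 whenever φ(y,t) ∈ [1, 1/ω(B)], for a.e. x,y ∈ B ∩ Ω and every ball B with ω(B) ≤ 1. -/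
open MeasureTheory Metric Filter Set

/-- On a bounded domain, (A1)_ω implies (A1')_ω (in the weaker form with `+1`). -/
theorem stmt_11 (n : ℕ) (L β₁ : ℝ) (hL : 1 ≤ L) (hβ₁ : 0 < β₁ ∧ β₁ ≤ 1)
    (Ω : Set (EuclideanSpace ℝ (Fin n))) (hΩb : Bornology.IsBounded Ω) (hΩm : MeasurableSet Ω)
    (ω : EuclideanSpace ℝ (Fin n) → ℝ) (hωnonneg : ∀ x, 0 ≤ ω x)
    (hωloc : LocallyIntegrable ω) (hωΩ : IntegrableOn ω Ω)
    (φ : EuclideanSpace ℝ (Fin n) → ℝ → ℝ)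
    (hφnonneg : ∀ x ∈ Ω, ∀ t : ℝ, 0 ≤ t → 0 ≤ φ x t)
    (hφmono : ∀ x ∈ Ω, MonotoneOn (φ x) (Set.Ici 0))
    (hφ0 : ∀ x ∈ Ω, φ x 0 = 0)
    (hφ0' : ∀ x ∈ Ω, Tendsto (φ x) (nhdsWithin 0 (Set.Ioi 0)) (nhds 0))
    (hφtop : ∀ x ∈ Ω, Tendsto (φ x) atTop atTop)
    (hainc1 : ∀ x ∈ Ω, ∀ s t : ℝ, 0 < s → s ≤ t → φ x s / s ≤ L * (φ x t / t))
    (hA1 : ∀ (z : EuclideanSpace ℝ (Fin n)) (r : ℝ), 0 < r →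
      (∫ y in ball z r, ω y) ≤ 1 →
      ∃ N : Set (EuclideanSpace ℝ (Fin n)), volume N = 0 ∧
        ∀ x ∈ (ball z r ∩ Ω) \ N, ∀ y ∈ (ball z r ∩ Ω) \ N,
          ∀ t : ℝ, 1 ≤ t → t ≤ 1 / ∫ y' in ball z r, ω y' →
            β₁ * phiInv φ x t ≤ phiInv φ y t) :
    ∃ βhat : ℝ, 0 < βhat ∧ βhat ≤ 1 ∧
      ∀ (z : EuclideanSpace ℝ (Fin n)) (r : ℝ), 0 < r →
        (∫ y in ball z r, ω y) ≤ 1 →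
        ∃ N : Set (EuclideanSpace ℝ (Fin n)), volume N = 0 ∧
          ∀ x ∈ (ball z r ∩ Ω) \ N, ∀ y ∈ (ball z r ∩ Ω) \ N,
            ∀ t : ℝ, 0 ≤ t → 1 ≤ φ y t → φ y t ≤ 1 / ∫ y' in ball z r, ω y' →
              φ x (βhat * t) ≤ φ y t + 1 := by
  obtain ⟨hβ₁pos, hβ₁le⟩ := hβ₁
  have hLpos : (0:ℝ) < L := lt_of_lt_of_le one_pos hL
  refine ⟨β₁ / (2 * L), by positivity, ?_, ?_⟩
  · rw [div_le_one (by positivity)]; nlinarith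
  intro z r hr hω1
  obtain ⟨N, hN0, hN⟩ := hA1 z r hr hω1
  refine ⟨N, hN0, ?_⟩
  intro x hx y hy t ht hφyt1 hφytω
  have hxΩ : x ∈ Ω := hx.1.2
  have hyΩ : y ∈ Ω := hy.1.2
  -- t > 0
  have ht0 : 0 < t := by
    rcases ht.lt_or_eq with h | h
    · exact h
    · exfalso
      have : φ y t = 0 := by rw [← h]; exact hφ0 y hyΩ
      linarith
  set s : ℝ := φ y t with hs
  have hs1 : (1:ℝ) ≤ s := hφyt1
  have hspos : (0:ℝ) < s := lt_of_lt_of_le one_pos hs1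
  -- the defining set of phiInv is nonempty and bounded below
  have hmemset : ∀ w ∈ Ω, ∀ u : ℝ, Set.Nonempty {τ : ℝ | 0 ≤ τ ∧ u ≤ φ w τ} := by
    intro w hw u
    obtain ⟨τ, h1, h2⟩ := (((hφtop w hw).eventually_ge_atTop u).and
      (eventually_ge_atTop (0:ℝ))).exists
    exact ⟨τ, h2, h1⟩
  have hbdd : ∀ (w : EuclideanSpace ℝ (Fin n)) (u : ℝ),
      BddBelow {τ : ℝ | 0 ≤ τ ∧ u ≤ φ w τ} := fun w u => ⟨0, fun τ hτ => hτ.1⟩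
  -- φ w τ ≥ u for every τ > phiInv φ w u
  have hgt : ∀ w ∈ Ω, ∀ u τ : ℝ, phiInv φ w u < τ → u ≤ φ w τ := by
    intro w hw u τ hτ
    obtain ⟨τ', ⟨hτ'0, hτ'u⟩, hτ'lt⟩ := exists_lt_of_csInf_lt (hmemset w hw u) hτ
    exact hτ'u.trans (hφmono w hw hτ'0 (le_trans hτ'0 hτ'lt.le) hτ'lt.le)
  -- a := phiInv φ y s
  set a : ℝ := phiInv φ y s with ha
  have ha0 : 0 ≤ a := le_csInf (hmemset y hyΩ s) (fun τ hτ => hτ.1)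
  have hat : a ≤ t := csInf_le (hbdd y s) ⟨ht, le_refl s⟩
  -- a > 0 using continuity at 0⁺
  have hapos : 0 < a := by
    by_contra hc
    push_neg at hc
    have ha0' : a = 0 := le_antisymm hc ha0
    have hev : ∀ᶠ τ in nhdsWithin 0 (Set.Ioi 0), φ y τ < 1 :=
      (hφ0' y hyΩ).eventually (eventually_lt_nhds (show (0:ℝ) < 1 by norm_num))
    obtain ⟨τ, hτlt, hτpos⟩ := (hev.and self_mem_nhdsWithin).exists
    have : s ≤ φ y τ := hgt y hyΩ s τ (by rw [← ha, ha0']; exact hτpos)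
    linarith
  -- t ≤ L * a
  have htLa : t ≤ L * a := by
    by_contra hc
    push_neg at hc
    have haLt : a < t / L := by rw [lt_div_iff₀ hLpos]; nlinarith
    set τ : ℝ := (a + t / L) / 2 with hτdef
    have hτa : a < τ := by simp only [hτdef]; linarith
    have hτlt : τ < t / L := by simp only [hτdef]; linarith
    have hτpos : 0 < τ := lt_of_le_of_lt ha0 hτa
    have hτt : τ ≤ t := le_trans hτlt.le (by rw [div_le_iff₀ hLpos]; nlinarith)
    have h1 : s ≤ φ y τ := hgt y hyΩ s τ hτa
    have h3 : φ y τ / τ ≤ L * (s / t) := hainc1 y hyΩ τ t hτpos hτt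
    have h4 : s / τ ≤ L * (s / t) := le_trans (by gcongr) h3
    have h4' : s / τ ≤ (L * s) / t := by rw [mul_div_assoc]; exact h4
    rw [div_le_div_iff₀ hτpos ht0] at h4'
    have h5 : t ≤ L * τ := by nlinarith
    have h6 : L * τ < L * (t / L) := mul_lt_mul_of_pos_left hτlt hLpos
    have h7 : L * (t / L) = t := by field_simp
    linarith
  -- A1 with level s, swapping roles, gives β₁ * a ≤ phiInv φ x s
  have hA1app : β₁ * a ≤ phiInv φ x s := hN y hy x hx s hs1 hφytω
  -- conclude
  have hkey : (β₁ / (2 * L)) * t < phiInv φ x s := by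
    have h1 : β₁ * (t / L) ≤ β₁ * a := by
      apply mul_le_mul_of_nonneg_left _ hβ₁pos.le
      rw [div_le_iff₀ hLpos]; nlinarith
    have h2 : (β₁ / (2 * L)) * t < β₁ * (t / L) := by
      have := div_lt_div_of_pos_left ht0 hLpos (show L < 2 * L by linarith)
      calc (β₁ / (2 * L)) * t = β₁ * (t / (2 * L)) := by ring
        _ < β₁ * (t / L) := by gcongr
    linarith
  have hfinal : φ x ((β₁ / (2 * L)) * t) < s := by
    by_contra hc
    push_neg at hc
    have : phiInv φ x s ≤ (β₁ / (2 * L)) * t :=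
      csInf_le (hbdd x s) ⟨by positivity, hc⟩
    linarith
  linarith
end

section
/- Let φ : [0,∞) → [0,∞) be increasing, satisfy (aInc)_1 with constant L and (aDec)_q with constant L for some q ≥ 1, and φ(0)=0. Then for any σ-finite measure μ, any set E with 0 < μ(E) < ∞, and any f ∈ L^1(E,μ): φ( (1/μ(E)) ∫_E |f| dμ ) ≤ C (1/μ(E)) ∫_E φ(|f|) dμ, where C depends only on L. -/
open MeasureTheory ENNReal

/-- Jensen-type inequality with constant for functions satisfying (aInc)₁ and (aDec)_q. -/
theorem stmt_16 (q L : ℝ) (hq : 1 ≤ q) (hL : 1 ≤ L)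
    (φ : ℝ → ℝ) (hφnonneg : ∀ t, 0 ≤ t → 0 ≤ φ t)
    (hφmono : MonotoneOn φ (Set.Ici 0)) (hφ0 : φ 0 = 0)
    (hainc1 : ∀ s t : ℝ, 0 < s → s ≤ t → φ s / s ≤ L * (φ t / t))
    (hadec : ∀ s t : ℝ, 0 < s → s ≤ t → φ t / t ^ q ≤ L * (φ s / s ^ q)) :
    ∃ C : ℝ, 0 < C ∧
      ∀ (α : Type) (inst : MeasurableSpace α) (μ : Measure α), SigmaFinite μ →
        ∀ E : Set α, MeasurableSet E → 0 < μ E → μ E < ∞ →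
          ∀ f : α → ℝ, IntegrableOn f E μ →
            ENNReal.ofReal (φ ((μ E).toReal⁻¹ * ∫ x in E, |f x| ∂μ)) ≤
              ENNReal.ofReal C *
                ((∫⁻ x in E, ENNReal.ofReal (φ |f x|) ∂μ) / μ E) := by
  have hL0 : (0:ℝ) < L := lt_of_lt_of_le one_pos hL
  have h2q : (0:ℝ) < (2:ℝ) ^ q := Real.rpow_pos_of_pos two_pos q
  refine ⟨L^2 * 2 ^ q, by positivity, ?_⟩
  intro α inst μ hσ E hE hE0 hEfin f hf
  set m : ℝ := (μ E).toReal⁻¹ * ∫ x in E, |f x| ∂μ with hm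
  have hμpos : 0 < (μ E).toReal := ENNReal.toReal_pos hE0.ne' hEfin.ne
  have hm0 : 0 ≤ m := by
    apply mul_nonneg (by positivity)
    exact integral_nonneg fun x => abs_nonneg _
  rcases eq_or_lt_of_le hm0 with h0 | hmpos
  · rw [← h0, hφ0, ENNReal.ofReal_zero]
    exact zero_le
  -- m > 0
  have hm2 : 0 < m / 2 := by linarith
  have hφm2 : 0 ≤ φ (m/2) := hφnonneg _ hm2.le
  set c : ℝ := φ (m/2) / (L * (m/2)) with hc
  have hc0 : 0 ≤ c := div_nonneg hφm2 (by positivity)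
  -- pointwise bound
  have key : ∀ t : ℝ, 0 ≤ t → c * (t - m/2) ≤ φ t := by
    intro t ht
    rcases lt_or_ge t (m/2) with h | h
    · have : c * (t - m/2) ≤ 0 := mul_nonpos_of_nonneg_of_nonpos hc0 (by linarith)
      exact this.trans (hφnonneg t ht)
    · have ht0 : 0 < t := lt_of_lt_of_le hm2 h
      have := hainc1 (m/2) t hm2 h
      -- φ(m/2)/(m/2) ≤ L * (φ t / t)
      have hct : c * t ≤ φ t := by
        rw [hc, div_mul_eq_mul_div, div_le_iff₀ (by positivity)]
        calc φ (m/2) * t = (φ (m/2) / (m/2)) * (m/2) * t := by field_simp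
          _ ≤ (L * (φ t / t)) * (m/2) * t := by
              apply mul_le_mul_of_nonneg_right (mul_le_mul_of_nonneg_right this hm2.le) ht0.le
          _ = φ t * (L * (m/2)) := by field_simp
      nlinarith [mul_nonneg hc0 hm2.le]
  -- integrability
  have hfabs : IntegrableOn (fun x => |f x|) E μ := hf.abs
  have hconst : IntegrableOn (fun _ => m/2) E μ := integrableOn_const hEfin.ne
  have hg : IntegrableOn (fun x => c * (|f x| - m/2)) E μ :=
    ((hfabs.sub hconst).const_mul c)
  -- integral computation
  have hint : ∫ x in E, c * (|f x| - m/2) ∂μ = φ (m/2) / L * (μ E).toReal := by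
    rw [integral_const_mul, integral_sub hfabs hconst, integral_const,
      measureReal_restrict_apply_univ, measureReal_def, smul_eq_mul]
    have hI : ∫ x in E, |f x| ∂μ = m * (μ E).toReal := by
      rw [hm]; field_simp
    rw [hI, hc]
    field_simp
    ring
  -- lower bound for lintegral
  have hlb : ENNReal.ofReal (φ (m/2) / L) * μ E ≤ ∫⁻ x in E, ENNReal.ofReal (φ |f x|) ∂μ := by
    have hgp : IntegrableOn (fun x => max (c * (|f x| - m/2)) 0) E μ := hg.pos_part
    have hmax : ∀ a : ℝ, ENNReal.ofReal (max a 0) = ENNReal.ofReal a := by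
      intro a
      rcases le_or_gt a 0 with h | h
      · rw [max_eq_right h, ENNReal.ofReal_zero, ENNReal.ofReal_of_nonpos h]
      · rw [max_eq_left h.le]
    have h1 : ENNReal.ofReal (∫ x in E, c * (|f x| - m/2) ∂μ)
        ≤ ∫⁻ x in E, ENNReal.ofReal (c * (|f x| - m/2)) ∂μ := by
      calc ENNReal.ofReal (∫ x in E, c * (|f x| - m/2) ∂μ)
          ≤ ENNReal.ofReal (∫ x in E, max (c * (|f x| - m/2)) 0 ∂μ) :=
            ENNReal.ofReal_le_ofReal (integral_mono hg hgp fun x => le_max_left _ _)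
        _ = ∫⁻ x in E, ENNReal.ofReal (max (c * (|f x| - m/2)) 0) ∂μ :=
            ofReal_integral_eq_lintegral_ofReal hgp
              (Filter.Eventually.of_forall fun x => le_max_right _ _)
        _ = ∫⁻ x in E, ENNReal.ofReal (c * (|f x| - m/2)) ∂μ := by simp_rw [hmax]
    have h2 : (∫⁻ x in E, ENNReal.ofReal (c * (|f x| - m/2)) ∂μ)
        ≤ ∫⁻ x in E, ENNReal.ofReal (φ |f x|) ∂μ :=
      lintegral_mono fun x => ENNReal.ofReal_le_ofReal (key _ (abs_nonneg _))
    calc ENNReal.ofReal (φ (m/2) / L) * μ E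
        = ENNReal.ofReal (φ (m/2) / L * (μ E).toReal) := by
          rw [ENNReal.ofReal_mul (by positivity), ENNReal.ofReal_toReal hEfin.ne]
      _ = ENNReal.ofReal (∫ x in E, c * (|f x| - m/2) ∂μ) := by rw [hint]
      _ ≤ _ := h1.trans h2
  -- upper bound for φ m
  have hφm : φ m ≤ L * 2 ^ q * φ (m/2) := by
    have := hadec (m/2) m hm2 (by linarith)
    have hmq : (0:ℝ) < m ^ q := Real.rpow_pos_of_pos hmpos q
    have hm2q : (0:ℝ) < (m/2) ^ q := Real.rpow_pos_of_pos hm2 q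
    have h2 : m ^ q = 2 ^ q * (m/2) ^ q := by
      rw [← Real.mul_rpow two_pos.le hm2.le]; congr 1; ring
    rw [div_le_iff₀ hmq] at this
    calc φ m ≤ L * (φ (m/2) / (m/2)^q) * m ^ q := this
      _ = L * 2 ^ q * φ (m/2) := by rw [h2]; field_simp
  -- conclude
  calc ENNReal.ofReal (φ m) ≤ ENNReal.ofReal (L^2 * 2 ^ q * (φ (m/2) / L)) := by
        apply ENNReal.ofReal_le_ofReal
        rw [show L^2 * 2^q * (φ (m/2) / L) = L * 2^q * φ (m/2) by field_simp]
        exact hφm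
    _ = ENNReal.ofReal (L^2 * 2 ^ q) * ENNReal.ofReal (φ (m/2) / L) := by
        rw [ENNReal.ofReal_mul (by positivity)]
    _ ≤ ENNReal.ofReal (L^2 * 2 ^ q) * ((∫⁻ x in E, ENNReal.ofReal (φ |f x|) ∂μ) / μ E) := by
        apply mul_le_mul_right
        rw [ENNReal.le_div_iff_mul_le (Or.inl hE0.ne') (Or.inl hEfin.ne)]
        exact hlb
end
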